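/- Let X and Y be random variables on finite alphabets 𝒳 and 𝒴 with joint pmf P_{X,Y} having strictly positive marginals p_X and p_Y, let B be the |𝒳| × |𝒴| matrix with entries B_{x,y} = P_{X,Y}(x,y)/√(p_X(x) p_Y(y)), and let σ₁ ≥ σ₂ ≥ … be the singular values of B in nonincreasing order. Then for any d ≤ min(|𝒳|, |𝒴|), the minimum of E[‖f(X) − g(Y)‖₂²] over all f : 𝒳 → ℝ^d with E[f(X) f(X)ᵀ] = I_d and all g : 𝒴 → ℝ^d equals d − Σ_{i=1}^{d} σ_i². -/

import Mathlib

open scoped BigOperators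
open Matrix

/-- The singular values of a real matrix `M`: the nonnegative square roots of the
eigenvalues of `MᵀM` (there are `n` of them for an `m × n` matrix, indexed by `n`). -/
noncomputable def singularValues {m n : Type*} [Fintype m] [Fintype n] [DecidableEq n]
    (M : Matrix m n ℝ) : n → ℝ :=
  fun i => Real.sqrt ((Matrix.isHermitian_conjTranspose_mul_self M).eigenvalues i)


lemma parseval' {α : Type*} [Fintype α] [DecidableEq α]
    (b : OrthonormalBasis α ℝ (EuclideanSpace ℝ α)) (u : α → ℝ) :
    ∑ x, (u x)^2 = ∑ k, (∑ x, u x * b k x)^2 := by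
  have hU : ∀ (w z : EuclideanSpace ℝ α), inner ℝ w z = ∑ x, w x * z x := by
    intro w z
    simp [PiLp.inner_apply, RCLike.inner_apply, mul_comm]
  let U : EuclideanSpace ℝ α := WithLp.toLp 2 u
  have h1 : (inner ℝ U U : ℝ) = ∑ x, u x * u x := hU U U
  have h2 : (inner ℝ (b.repr U) (b.repr U) : ℝ) = inner ℝ U U := b.repr.inner_map_map U U
  have h3 : (inner ℝ (b.repr U) (b.repr U) : ℝ) = ∑ k, (b.repr U k) * (b.repr U k) := hU _ _
  have h4 : ∀ k, b.repr U k = ∑ x, u x * b k x := by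
    intro k
    rw [b.repr_apply_apply, hU]
    exact Finset.sum_congr rfl fun x _ => mul_comm _ _
  calc ∑ x, (u x)^2 = ∑ x, u x * u x := by simp [sq]
    _ = ∑ k, (b.repr U k) * (b.repr U k) := by rw [← h1, ← h2, h3]
    _ = ∑ k, (∑ x, u x * b k x)^2 := by
        refine Finset.sum_congr rfl fun k _ => ?_
        rw [h4 k, sq]


lemma bessel' {ι α : Type*} [Fintype ι] [DecidableEq ι] [Fintype α] (φ : ι → α → ℝ)
    (hφ : ∀ i j, ∑ x, φ i x * φ j x = if i = j then 1 else 0) (u : α → ℝ) :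
    ∑ i, (∑ x, u x * φ i x)^2 ≤ ∑ x, (u x)^2 := by
  set c : ι → ℝ := fun i => ∑ x, u x * φ i x with hc
  have h2 : ∑ x, u x * (∑ i, c i * φ i x) = ∑ i, (c i)^2 := by
    have e1 : ∀ x, u x * (∑ i, c i * φ i x) = ∑ i, c i * (u x * φ i x) := by
      intro x; rw [Finset.mul_sum]; exact Finset.sum_congr rfl fun i _ => by ring
    rw [Finset.sum_congr rfl fun x _ => e1 x, Finset.sum_comm]
    refine Finset.sum_congr rfl fun i _ => ?_
    rw [← Finset.mul_sum, sq]
  have h3 : ∑ x, (∑ i, c i * φ i x)^2 = ∑ i, (c i)^2 := by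
    have e1 : ∀ x, (∑ i, c i * φ i x)^2
        = ∑ i, ∑ j, (c i * c j) * (φ i x * φ j x) := by
      intro x
      rw [sq, Finset.sum_mul_sum]
      exact Finset.sum_congr rfl fun i _ => Finset.sum_congr rfl fun j _ => by ring
    rw [Finset.sum_congr rfl fun x _ => e1 x, Finset.sum_comm]
    have e2 : ∀ i, ∑ x, ∑ j, (c i * c j) * (φ i x * φ j x) = (c i)^2 := by
      intro i
      rw [Finset.sum_comm]
      have e3 : ∀ j, ∑ x, (c i * c j) * (φ i x * φ j x)
          = (c i * c j) * (if i = j then 1 else 0) := by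
        intro j; rw [← hφ i j]; exact (Finset.mul_sum _ _ _).symm
      rw [Finset.sum_congr rfl fun j _ => e3 j]
      simp [sq]
    exact Finset.sum_congr rfl fun i _ => e2 i
  have key : (0:ℝ) ≤ ∑ x, (u x - ∑ i, c i * φ i x)^2 :=
    Finset.sum_nonneg fun x _ => sq_nonneg _
  have expand : ∑ x, (u x - ∑ i, c i * φ i x)^2
      = ∑ x, (u x)^2 - 2 * (∑ x, u x * (∑ i, c i * φ i x)) + ∑ x, (∑ i, c i * φ i x)^2 := by
    have e1 : ∀ x, (u x - ∑ i, c i * φ i x)^2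
        = (u x)^2 - 2 * (u x * (∑ i, c i * φ i x)) + (∑ i, c i * φ i x)^2 := fun x => by ring
    rw [Finset.sum_congr rfl fun x _ => e1 x, Finset.sum_add_distrib, Finset.sum_sub_distrib,
      ← Finset.mul_sum]
  rw [expand, h2, h3] at key
  linarith

lemma weighted_le' {N d : ℕ} (hd : d ≤ N) (μ w : Fin N → ℝ) (hμa : Antitone μ)
    (hμ0 : ∀ k, 0 ≤ μ k) (hw0 : ∀ k, 0 ≤ w k) (hw1 : ∀ k, w k ≤ 1)
    (hws : ∑ k, w k ≤ (d:ℝ)) :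
    ∑ k, μ k * w k ≤ ∑ i : Fin d, μ (Fin.castLE hd i) := by
  rcases Nat.eq_zero_or_pos d with hd0 | hdpos
  · subst hd0
    have hz : ∀ k ∈ Finset.univ, w k = 0 :=
      (Finset.sum_eq_zero_iff_of_nonneg (fun k _ => hw0 k)).mp
        (le_antisymm (by simpa using hws) (Finset.sum_nonneg fun k _ => hw0 k))
    have : ∑ k, μ k * w k = 0 := Finset.sum_eq_zero fun k hk => by rw [hz k hk, mul_zero]
    simp [this]
  · have hDlt : d - 1 < N := by omega
    set D : Fin N := ⟨d - 1, hDlt⟩ with hD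
    set S : Finset (Fin N) := Finset.univ.map (Fin.castLEEmb hd) with hS
    have hmemS : ∀ k : Fin N, k ∈ S ↔ k.val < d := by
      intro k
      simp only [hS, Finset.mem_map, Finset.mem_univ, true_and]
      constructor
      · rintro ⟨i, rfl⟩; exact i.isLt
      · intro hk; exact ⟨⟨k.val, hk⟩, by ext; simp⟩
    have hsumS : ∀ f : Fin N → ℝ, ∑ k ∈ S, f k = ∑ i : Fin d, f (Fin.castLE hd i) := by
      intro f; rw [hS, Finset.sum_map]; rfl
    have hcardS : (S.card : ℝ) = d := by rw [hS, Finset.card_map, Finset.card_univ]; simp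
    have hμsn : 0 ≤ μ D := hμ0 D
    -- bounds
    have hinS : ∀ k ∈ S, μ D ≤ μ k := by
      intro k hk
      exact hμa (by rw [Fin.le_def]; have := (hmemS k).mp hk; simp [hD]; omega)
    have houtS : ∀ k ∈ Sᶜ, μ k ≤ μ D := by
      intro k hk
      have : ¬ (k.val < d) := by
        intro h; exact (Finset.mem_compl.mp hk) ((hmemS k).mpr h)
      exact hμa (by rw [Fin.le_def]; simp [hD]; omega)
    have split : ∑ k, μ k * w k = ∑ k ∈ S, μ k * w k + ∑ k ∈ Sᶜ, μ k * w k :=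
      (Finset.sum_add_sum_compl S _).symm
    have hb1 : ∑ k ∈ Sᶜ, μ k * w k ≤ ∑ k ∈ Sᶜ, μ D * w k :=
      Finset.sum_le_sum fun k hk => mul_le_mul_of_nonneg_right (houtS k hk) (hw0 k)
    have hb2 : ∑ k ∈ S, μ k * w k = ∑ k ∈ S, ((μ k - μ D) * w k + μ D * w k) :=
      Finset.sum_congr rfl fun k _ => by ring
    have hb3 : ∑ k ∈ S, (μ k - μ D) * w k ≤ ∑ k ∈ S, (μ k - μ D) := by
      refine Finset.sum_le_sum fun k hk => ?_
      have h1 : 0 ≤ μ k - μ D := by linarith [hinS k hk]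
      calc (μ k - μ D) * w k ≤ (μ k - μ D) * 1 :=
            mul_le_mul_of_nonneg_left (hw1 k) h1
        _ = μ k - μ D := mul_one _
    have hb4 : ∑ k ∈ S, μ D * w k + ∑ k ∈ Sᶜ, μ D * w k = μ D * ∑ k, w k := by
      rw [← Finset.mul_sum, ← Finset.mul_sum, ← mul_add, Finset.sum_add_sum_compl]
    have hb5 : μ D * ∑ k, w k ≤ μ D * d := mul_le_mul_of_nonneg_left hws hμsn
    have hb6 : ∑ k ∈ S, (μ k - μ D) = ∑ k ∈ S, μ k - d * μ D := by
      rw [Finset.sum_sub_distrib, Finset.sum_const, nsmul_eq_mul]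
      rw [hS, Finset.card_map, Finset.card_univ]
      simp
    have final : ∑ k, μ k * w k ≤ ∑ k ∈ S, μ k := by
      rw [split, hb2, Finset.sum_add_distrib]
      have := hb4
      nlinarith [hb1, hb3, hb5, hb6]
    calc ∑ k, μ k * w k ≤ ∑ k ∈ S, μ k := final
      _ = ∑ i : Fin d, μ (Fin.castLE hd i) := hsumS μ


section
variable {α β : Type} [Fintype α] [Fintype β] [DecidableEq α]

/-- orthonormality of the eigenbasis in plain sum form -/
lemma eigbasis_ortho {A : Matrix α α ℝ} (hA : A.IsHermitian) (k l : α) :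
    ∑ a, hA.eigenvectorBasis k a * hA.eigenvectorBasis l a = if k = l then 1 else 0 := by
  have h := hA.eigenvectorBasis.orthonormal
  rw [orthonormal_iff_ite] at h
  simpa [PiLp.inner_apply, RCLike.inner_apply, mul_comm] using h k l

/-- `⟨Mᵀ v_k, Mᵀ v_l⟩ = δ_{kl} ν_k` where `v` is the eigenbasis of `A = M Mᵀ`. -/
lemma eig_col_ortho {A : Matrix α α ℝ} (hA : A.IsHermitian) (M : Matrix α β ℝ)
    (hAM : A = M * Mᵀ) (k l : α) :
    ∑ b, (∑ a, M a b * hA.eigenvectorBasis k a) * (∑ a, M a b * hA.eigenvectorBasis l a)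
      = if k = l then hA.eigenvalues k else 0 := by
  set v : α → α → ℝ := fun k => hA.eigenvectorBasis k with hv
  have hAv : ∀ l a, ∑ a', A a a' * v l a' = hA.eigenvalues l * v l a := by
    intro l a
    have := congr_fun (hA.mulVec_eigenvectorBasis l) a
    simpa [Matrix.mulVec, dotProduct] using this
  calc ∑ b, (∑ a, M a b * v k a) * (∑ a, M a b * v l a)
      = ∑ b, ∑ a, ∑ a', (v k a * v l a') * (M a b * M a' b) := by
        refine Finset.sum_congr rfl fun b _ => ?_
        rw [Finset.sum_mul_sum]
        exact Finset.sum_congr rfl fun a _ => Finset.sum_congr rfl fun a' _ => by ring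
    _ = ∑ a, ∑ a', (v k a * v l a') * ∑ b, (M a b * M a' b) := by
        rw [Finset.sum_comm]
        refine Finset.sum_congr rfl fun a _ => ?_
        rw [Finset.sum_comm]
        exact Finset.sum_congr rfl fun a' _ => (Finset.mul_sum _ _ _).symm
    _ = ∑ a, ∑ a', (v k a * v l a') * A a a' := by
        refine Finset.sum_congr rfl fun a _ => Finset.sum_congr rfl fun a' _ => ?_
        rw [hAM, Matrix.mul_apply]
        simp [Matrix.transpose_apply]
    _ = ∑ a, v k a * (∑ a', A a a' * v l a') := by
        refine Finset.sum_congr rfl fun a _ => ?_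
        rw [Finset.mul_sum]
        exact Finset.sum_congr rfl fun a' _ => by ring
    _ = ∑ a, v k a * (hA.eigenvalues l * v l a) := by
        exact Finset.sum_congr rfl fun a _ => by rw [hAv l a]
    _ = hA.eigenvalues l * ∑ a, v k a * v l a := by
        rw [Finset.mul_sum]; exact Finset.sum_congr rfl fun a _ => by ring
    _ = if k = l then hA.eigenvalues k else 0 := by
        rw [eigbasis_ortho hA k l]
        by_cases h : k = l <;> simp [h]

lemma eig_nonneg {A : Matrix α α ℝ} (hA : A.IsHermitian) (M : Matrix α β ℝ)
    (hAM : A = M * Mᵀ) (k : α) : 0 ≤ hA.eigenvalues k := by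
  have := eig_col_ortho hA M hAM k k
  rw [if_pos rfl] at this
  rw [← this]
  exact Finset.sum_nonneg fun b _ => mul_self_nonneg _
end


section
variable {α β : Type} [Fintype α] [Fintype β] [DecidableEq α]

lemma kyfan_bound {A : Matrix α α ℝ} (hA : A.IsHermitian) (M : Matrix α β ℝ)
    (hAM : A = M * Mᵀ)
    (es : Fin (Fintype.card α) ≃ α) (hmono : Antitone (fun i => hA.eigenvalues (es i)))
    (d : ℕ) (hd : d ≤ Fintype.card α)
    (ψ : Fin d → β → ℝ) (hψ : ∀ i j, ∑ b, ψ i b * ψ j b = if i = j then 1 else 0) :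
    ∑ i, ∑ a, (∑ b, M a b * ψ i b)^2
      ≤ ∑ i : Fin d, hA.eigenvalues (es (Fin.castLE hd i)) := by
  classical
  set ν : α → ℝ := hA.eigenvalues with hνdef
  set v : α → α → ℝ := fun k => hA.eigenvectorBasis k with hvdef
  set u : α → β → ℝ := fun k b => ∑ a, M a b * v k a with hudef
  set q : Fin d → α → ℝ := fun i a => ∑ b, M a b * ψ i b with hqdef
  set c : Fin d → α → ℝ := fun i k => ∑ a, q i a * v k a with hcdef
  have hν0 : ∀ k, 0 ≤ ν k := eig_nonneg hA M hAM
  have huu : ∀ k l, ∑ b, u k b * u l b = if k = l then ν k else 0 :=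
    eig_col_ortho hA M hAM
  have hck : ∀ i k, c i k = ∑ b, u k b * ψ i b := by
    intro i k
    calc c i k = ∑ a, ∑ b, (M a b * v k a) * ψ i b := by
          refine Finset.sum_congr rfl fun a _ => ?_
          rw [Finset.sum_mul]
          exact Finset.sum_congr rfl fun b _ => by ring
      _ = ∑ b, ∑ a, (M a b * v k a) * ψ i b := Finset.sum_comm
      _ = ∑ b, u k b * ψ i b := by
          refine Finset.sum_congr rfl fun b _ => ?_
          rw [hudef, Finset.sum_mul]
  set s : α → ℝ := fun k => ∑ i, (c i k)^2 with hsdef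
  have hLHS : ∑ i, ∑ a, (q i a)^2 = ∑ k, s k := by
    calc ∑ i, ∑ a, (q i a)^2 = ∑ i, ∑ k, (c i k)^2 := by
          refine Finset.sum_congr rfl fun i _ => ?_
          exact parseval' hA.eigenvectorBasis (q i)
      _ = ∑ k, s k := Finset.sum_comm
  have hs0 : ∀ k, 0 ≤ s k := fun k => Finset.sum_nonneg fun i _ => sq_nonneg _
  have hsle : ∀ k, s k ≤ ν k := by
    intro k
    have hb := bessel' ψ hψ (u k)
    have : ∑ b, (u k b)^2 = ν k := by
      have := huu k k; rw [if_pos rfl] at this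
      rw [← this]; exact Finset.sum_congr rfl fun b _ => by rw [sq]
    rw [this] at hb
    refine le_trans (le_of_eq ?_) hb
    rw [hsdef]
    refine Finset.sum_congr rfl fun i _ => ?_
    rw [hck i k]
  set w : α → ℝ := fun k => if 0 < ν k then s k / ν k else 0 with hwdef
  have hw0 : ∀ k, 0 ≤ w k := by
    intro k; rw [hwdef]
    by_cases h : 0 < ν k
    · simp only [if_pos h]; exact div_nonneg (hs0 k) (le_of_lt h)
    · simp only [if_neg h]; exact le_refl 0
  have hw1 : ∀ k, w k ≤ 1 := by
    intro k; rw [hwdef]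
    by_cases h : 0 < ν k
    · simp only [if_pos h]; exact (div_le_one h).mpr (hsle k)
    · simp only [if_neg h]; norm_num
  have hνw : ∀ k, ν k * w k = s k := by
    intro k; rw [hwdef]
    by_cases h : 0 < ν k
    · simp only [if_pos h]; field_simp
    · simp only [if_neg h]
      have hν : ν k = 0 := le_antisymm (not_lt.mp h) (hν0 k)
      have : s k = 0 := le_antisymm (hν ▸ hsle k) (hs0 k)
      rw [this, mul_zero]
  -- the û family over the subtype of positive eigenvalues
  have hws : ∑ k, w k ≤ (d : ℝ) := by
    set τ := {k : α // 0 < ν k}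
    set uh : τ → β → ℝ := fun k b => u k.1 b / Real.sqrt (ν k.1) with huhdef
    have huh : ∀ j k : τ, ∑ b, uh j b * uh k b = if j = k then 1 else 0 := by
      intro j k
      have e1 : ∑ b, uh j b * uh k b
          = (∑ b, u j.1 b * u k.1 b) / (Real.sqrt (ν j.1) * Real.sqrt (ν k.1)) := by
        rw [Finset.sum_div]
        exact Finset.sum_congr rfl fun b _ => by rw [huhdef, div_mul_div_comm]
      rw [e1, huu j.1 k.1]
      by_cases h : j = k
      · subst h
        rw [if_pos rfl, if_pos rfl, Real.mul_self_sqrt (hν0 j.1)]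
        exact div_self (ne_of_gt j.2)
      · rw [if_neg h, if_neg (fun hh => h (Subtype.ext hh)), zero_div]
    have hbess : ∀ i, ∑ k : τ, (c i k.1)^2 / ν k.1 ≤ 1 := by
      intro i
      have hb := bessel' uh huh (ψ i)
      have e2 : ∑ b, (ψ i b)^2 = 1 := by
        have := hψ i i; rw [if_pos rfl] at this
        rw [← this]; exact Finset.sum_congr rfl fun b _ => by rw [sq]
      rw [e2] at hb
      refine le_trans (le_of_eq ?_) hb
      refine Finset.sum_congr rfl fun k _ => ?_
      have e3 : ∑ b, ψ i b * uh k b = c i k.1 / Real.sqrt (ν k.1) := by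
        rw [hck i k.1, Finset.sum_div]
        exact Finset.sum_congr rfl fun b _ => by rw [huhdef, mul_div_assoc]; ring
      rw [e3, div_pow, Real.sq_sqrt (hν0 k.1)]
    have e4 : ∑ k, w k = ∑ k ∈ Finset.univ.filter (fun k => 0 < ν k), s k / ν k := by
      rw [Finset.sum_filter]
    have e5 : ∑ k ∈ Finset.univ.filter (fun k => 0 < ν k), s k / ν k
        = ∑ k : τ, s k.1 / ν k.1 := by
      rw [Finset.sum_subtype]
      intro k; simp
    have e6 : ∑ k : τ, s k.1 / ν k.1 = ∑ i : Fin d, ∑ k : τ, (c i k.1)^2 / ν k.1 := by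
      rw [Finset.sum_comm]
      refine Finset.sum_congr rfl fun k _ => ?_
      rw [hsdef, Finset.sum_div]
    calc ∑ k, w k = ∑ i : Fin d, ∑ k : τ, (c i k.1)^2 / ν k.1 := by rw [e4, e5, e6]
      _ ≤ ∑ i : Fin d, 1 := Finset.sum_le_sum fun i _ => hbess i
      _ = (d : ℝ) := by simp
  -- assemble
  have step : ∑ k, ν k * w k ≤ ∑ i : Fin d, ν (es (Fin.castLE hd i)) := by
    have e7 : ∑ k, ν k * w k = ∑ i : Fin (Fintype.card α), ν (es i) * w (es i) :=
      (Equiv.sum_comp es (fun k => ν k * w k)).symm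
    have e8 : ∑ i : Fin (Fintype.card α), w (es i) = ∑ k, w k :=
      Equiv.sum_comp es w
    rw [e7]
    exact weighted_le' hd (fun i => ν (es i)) (fun i => w (es i)) hmono
      (fun i => hν0 _) (fun i => hw0 _) (fun i => hw1 _) (e8 ▸ hws)
  calc ∑ i, ∑ a, (∑ b, M a b * ψ i b)^2 = ∑ k, s k := hLHS
    _ = ∑ k, ν k * w k := Finset.sum_congr rfl fun k _ => (hνw k).symm
    _ ≤ ∑ i : Fin d, ν (es (Fin.castLE hd i)) := step
end

lemma sum3' {ι : Type*} [Fintype ι] (F G H : ι → ℝ) :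
    ∑ i, (F i - 2 * G i + H i) = ∑ i, F i - 2 * ∑ i, G i + ∑ i, H i := by
  rw [Finset.sum_add_distrib, Finset.sum_sub_distrib, Finset.mul_sum]

/-- With `B x y = P(x,y)/√(pX(x) pY(y))` and `σ` the singular values of
`B` in nonincreasing order, for any `d ≤ min(|𝒳|, |𝒴|)` the minimum of
`E[‖f(X) − g(Y)‖₂²]` over all `f : 𝒳 → ℝ^d` with `E[f(X) f(X)ᵀ] = I_d` and all
`g : 𝒴 → ℝ^d` equals `d − Σ_{i=1}^d σᵢ²`. -/
theorem min_mse_eq_d_sub_sum_sq_singular_values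
    {𝒳 𝒴 : Type} [Fintype 𝒳] [Fintype 𝒴] [DecidableEq 𝒴]
    (P : 𝒳 → 𝒴 → ℝ)
    (hP0 : ∀ x y, 0 ≤ P x y)
    (hP1 : ∑ x, ∑ y, P x y = 1)
    (hpX : ∀ x, 0 < ∑ y, P x y)
    (hpY : ∀ y, 0 < ∑ x, P x y)
    (B : Matrix 𝒳 𝒴 ℝ)
    (hB : B = Matrix.of fun x y => P x y / Real.sqrt ((∑ y', P x y') * (∑ x', P x' y)))
    (σ : Fin (Fintype.card 𝒴) → ℝ) (hσmono : Antitone σ)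
    (e : Fin (Fintype.card 𝒴) ≃ 𝒴) (hσ : ∀ i, σ i = singularValues B (e i))
    (d : ℕ) (hd : d ≤ min (Fintype.card 𝒳) (Fintype.card 𝒴)) :
    IsLeast {t : ℝ | ∃ (f : 𝒳 → Fin d → ℝ) (g : 𝒴 → Fin d → ℝ),
        (∀ i j, ∑ x, (∑ y, P x y) * (f x i * f x j) = if i = j then 1 else 0) ∧
        t = ∑ x, ∑ y, P x y * (∑ i, (f x i - g y i) ^ 2)}
      ((d : ℝ) - ∑ i : Fin d, σ (Fin.castLE (hd.trans (min_le_right _ _)) i) ^ 2) := by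
  classical
  have hσ' : ∀ i, σ i
      = Real.sqrt ((Matrix.isHermitian_conjTranspose_mul_self B).eigenvalues (e i)) := hσ
  have hd𝒳 : d ≤ Fintype.card 𝒳 := hd.trans (min_le_left _ _)
  have hd𝒴 : d ≤ Fintype.card 𝒴 := hd.trans (min_le_right _ _)
  have hpXs : ∀ x, Real.sqrt (∑ y, P x y) ≠ 0 := fun x => ne_of_gt (Real.sqrt_pos.mpr (hpX x))
  have hpYs : ∀ y, Real.sqrt (∑ x, P x y) ≠ 0 := fun y => ne_of_gt (Real.sqrt_pos.mpr (hpY y))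
  have hA𝒴 : (Bᴴ * B).IsHermitian := Matrix.isHermitian_conjTranspose_mul_self B
  have hBH : Bᴴ = Bᵀ := Matrix.conjTranspose_eq_transpose_of_trivial B
  have hAM𝒴 : Bᴴ * B = Bᵀ * Bᵀᵀ := by rw [hBH, Matrix.transpose_transpose]
  have hμ0 : ∀ k, 0 ≤ hA𝒴.eigenvalues k := eig_nonneg hA𝒴 Bᵀ hAM𝒴
  have hσ0 : ∀ i, 0 ≤ σ i := fun i => (hσ' i) ▸ Real.sqrt_nonneg _
  have hσsq : ∀ i, σ i ^ 2 = hA𝒴.eigenvalues (e i) := by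
    intro i
    rw [hσ' i]
    exact Real.sq_sqrt (hμ0 (e i))
  have hμmono : Antitone (fun i => hA𝒴.eigenvalues (e i)) := by
    intro i j hij
    simp only
    rw [← hσsq i, ← hσsq j]
    exact pow_le_pow_left₀ (hσ0 j) (hσmono hij) 2
  set Sd : ℝ := ∑ i : Fin d, hA𝒴.eigenvalues (e (Fin.castLE hd𝒴 i)) with hSddef
  have htarget : ((d:ℝ) - ∑ i : Fin d, σ (Fin.castLE (hd.trans (min_le_right _ _)) i) ^ 2)
      = (d:ℝ) - Sd := by
    rw [hSddef]
    congr 1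
    exact Finset.sum_congr rfl fun i _ => hσsq _
  -- pointwise identity relating B and P
  have hBP : ∀ x y, B x y * Real.sqrt (∑ y', P x y') * Real.sqrt (∑ x', P x' y) = P x y := by
    intro x y
    have h1 := hpXs x
    have h2 := hpYs y
    rw [hB]
    simp only [Matrix.of_apply]
    rw [Real.sqrt_mul (le_of_lt (hpX x))]
    field_simp
  -- the master reduction identity
  have hred : ∀ (f : 𝒳 → Fin d → ℝ) (g : 𝒴 → Fin d → ℝ),
      (∀ i j, ∑ x, (∑ y, P x y) * (f x i * f x j) = if i = j then 1 else 0) →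
      ∑ x, ∑ y, P x y * (∑ i, (f x i - g y i) ^ 2)
        = (d:ℝ)
          - ∑ i : Fin d, ∑ y, (∑ x, B x y * (Real.sqrt (∑ y', P x y') * f x i))^2
          + ∑ i : Fin d, ∑ y, ((∑ x, B x y * (Real.sqrt (∑ y', P x y') * f x i))
              - Real.sqrt (∑ x', P x' y) * g y i)^2 := by
    intro f g hf
    set q : Fin d → 𝒴 → ℝ :=
      fun i y => ∑ x, B x y * (Real.sqrt (∑ y', P x y') * f x i) with hqdef
    set Ψ : Fin d → 𝒴 → ℝ := fun i y => Real.sqrt (∑ x', P x' y) * g y i with hΨdef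
    have e1 : ∑ x, ∑ y, P x y * (∑ i, (f x i - g y i) ^ 2)
        = ∑ i : Fin d, ∑ x, ∑ y, P x y * (f x i - g y i)^2 := by
      have h1 : ∀ x, ∑ y, P x y * (∑ i, (f x i - g y i) ^ 2)
          = ∑ y, ∑ i, P x y * (f x i - g y i)^2 :=
        fun x => Finset.sum_congr rfl fun y _ => Finset.mul_sum _ _ _
      rw [Finset.sum_congr rfl fun x _ => h1 x]
      rw [Finset.sum_congr rfl fun x _ => Finset.sum_comm]
      exact Finset.sum_comm
    have e2 : ∀ i : Fin d, ∑ x, ∑ y, P x y * (f x i - g y i)^2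
        = 1 - 2 * (∑ y, q i y * Ψ i y) + ∑ y, (Ψ i y)^2 := by
      intro i
      have ea : ∑ x, ∑ y, P x y * (f x i)^2 = 1 := by
        have h1 : ∀ x, ∑ y, P x y * (f x i)^2 = (∑ y, P x y) * (f x i * f x i) := by
          intro x
          rw [Finset.sum_mul]
          exact Finset.sum_congr rfl fun y _ => by ring
        rw [Finset.sum_congr rfl fun x _ => h1 x]
        have := hf i i
        rw [if_pos rfl] at this
        exact this
      have eb : ∑ x, ∑ y, P x y * (f x i * g y i) = ∑ y, q i y * Ψ i y := by
        rw [Finset.sum_comm]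
        refine Finset.sum_congr rfl fun y _ => ?_
        rw [hqdef, hΨdef]
        simp only
        rw [Finset.sum_mul]
        refine Finset.sum_congr rfl fun x _ => ?_
        rw [← hBP x y]
        ring
      have ec : ∑ x, ∑ y, P x y * (g y i)^2 = ∑ y, (Ψ i y)^2 := by
        rw [Finset.sum_comm]
        refine Finset.sum_congr rfl fun y _ => ?_
        rw [hΨdef]
        simp only
        rw [← Finset.sum_mul, mul_pow, Real.sq_sqrt (le_of_lt (hpY y))]
      have ed : ∑ x, ∑ y, P x y * (f x i - g y i)^2
          = ∑ x, ∑ y, (P x y * (f x i)^2 - 2 * (P x y * (f x i * g y i)) + P x y * (g y i)^2) := by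
        refine Finset.sum_congr rfl fun x _ => Finset.sum_congr rfl fun y _ => by ring
      rw [ed]
      have ee : ∀ (F G H : 𝒳 → 𝒴 → ℝ),
          ∑ x, ∑ y, (F x y - 2 * G x y + H x y)
            = ∑ x, ∑ y, F x y - 2 * (∑ x, ∑ y, G x y) + ∑ x, ∑ y, H x y := by
        intro F G H
        calc ∑ x, ∑ y, (F x y - 2 * G x y + H x y)
            = ∑ x, (∑ y, F x y - 2 * (∑ y, G x y) + ∑ y, H x y) :=
              Finset.sum_congr rfl fun x _ => sum3' _ _ _
          _ = ∑ x, ∑ y, F x y - 2 * (∑ x, ∑ y, G x y) + ∑ x, ∑ y, H x y :=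
              sum3' _ _ _
      rw [ee, ea, eb, ec]
    have e3 : ∑ i : Fin d, (1 - 2 * (∑ y, q i y * Ψ i y) + ∑ y, (Ψ i y)^2 : ℝ)
        = (d:ℝ) - 2 * (∑ i : Fin d, ∑ y, q i y * Ψ i y) + ∑ i : Fin d, ∑ y, (Ψ i y)^2 := by
      rw [sum3' (fun _ => (1:ℝ)) (fun i => ∑ y, q i y * Ψ i y) (fun i => ∑ y, (Ψ i y)^2)]
      simp
    have e4 : ∑ i : Fin d, ∑ y, (q i y - Ψ i y)^2
        = ∑ i : Fin d, ∑ y, (q i y)^2 - 2 * (∑ i : Fin d, ∑ y, q i y * Ψ i y)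
          + ∑ i : Fin d, ∑ y, (Ψ i y)^2 := by
      have h1 : ∀ i : Fin d, ∀ y, (q i y - Ψ i y)^2
          = (q i y)^2 - 2 * (q i y * Ψ i y) + (Ψ i y)^2 := fun i y => by ring
      rw [Finset.sum_congr rfl fun i _ => Finset.sum_congr rfl fun y _ => h1 i y]
      calc ∑ i : Fin d, ∑ y, ((q i y)^2 - 2 * (q i y * Ψ i y) + (Ψ i y)^2)
          = ∑ i : Fin d, (∑ y, (q i y)^2 - 2 * (∑ y, q i y * Ψ i y) + ∑ y, (Ψ i y)^2) :=
            Finset.sum_congr rfl fun i _ => sum3' _ _ _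
        _ = ∑ i : Fin d, ∑ y, (q i y)^2 - 2 * (∑ i : Fin d, ∑ y, q i y * Ψ i y)
            + ∑ i : Fin d, ∑ y, (Ψ i y)^2 := sum3' _ _ _
    rw [e1, Finset.sum_congr rfl fun i _ => e2 i, e3, e4]
    ring
  constructor
  · -- membership : construct the optimizer from eigenvectors of B * Bᵀ
    have hA𝒳 : (B * Bᵀ).IsHermitian := by
      have h := Matrix.isHermitian_conjTranspose_mul_self Bᵀ
      rw [Matrix.conjTranspose_eq_transpose_of_trivial, Matrix.transpose_transpose] at h
      exact h
    have hν0 : ∀ k, 0 ≤ hA𝒳.eigenvalues k := eig_nonneg hA𝒳 B rfl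
    -- a sorting equivalence for the eigenvalues of B * Bᵀ
    obtain ⟨es𝒳, hνmono⟩ : ∃ es𝒳 : Fin (Fintype.card 𝒳) ≃ 𝒳,
        Antitone (fun i => hA𝒳.eigenvalues (es𝒳 i)) := by
      set e0 : Fin (Fintype.card 𝒳) ≃ 𝒳 := (Fintype.equivFin 𝒳).symm with he0
      set π := Tuple.sort (fun i => - hA𝒳.eigenvalues (e0 i)) with hπ
      have hmon := Tuple.monotone_sort (fun i => - hA𝒳.eigenvalues (e0 i))
      refine ⟨(π : Equiv.Perm (Fin (Fintype.card 𝒳))).trans e0, ?_⟩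
      intro i j hij
      have := hmon hij
      simp only [Function.comp_apply] at this
      simp only [Equiv.trans_apply]
      linarith
    set ν : Fin (Fintype.card 𝒳) → ℝ := fun i => hA𝒳.eigenvalues (es𝒳 i) with hνdef
    set Sν : ℝ := ∑ i : Fin d, ν (Fin.castLE hd𝒳 i) with hSνdef
    set Φs : Fin d → 𝒳 → ℝ :=
      fun i x => hA𝒳.eigenvectorBasis (es𝒳 (Fin.castLE hd𝒳 i)) x with hΦsdef
    have hΦsortho : ∀ i j, ∑ x, Φs i x * Φs j x = if i = j then 1 else 0 := by
      intro i j
      rw [hΦsdef]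
      simp only
      rw [eigbasis_ortho hA𝒳]
      by_cases h : i = j
      · subst h; rw [if_pos rfl, if_pos rfl]
      · rw [if_neg h, if_neg]
        intro hh
        exact h (Fin.castLE_injective hd𝒳 (es𝒳.injective hh))
    have hval : ∀ i : Fin d, ∑ y, (∑ x, B x y * Φs i x)^2 = ν (Fin.castLE hd𝒳 i) := by
      intro i
      have h := eig_col_ortho hA𝒳 B rfl (es𝒳 (Fin.castLE hd𝒳 i)) (es𝒳 (Fin.castLE hd𝒳 i))
      rw [if_pos rfl] at h
      rw [hνdef]
      simp only
      rw [← h]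
      exact Finset.sum_congr rfl fun y _ => by rw [sq]
    -- Sν ≤ Sd
    have hle1 : Sν ≤ Sd := by
      have hKF := kyfan_bound hA𝒴 Bᵀ hAM𝒴 e hμmono d hd𝒴 Φs hΦsortho
      have hL : ∑ i, ∑ y, (∑ x, Bᵀ y x * Φs i x)^2 = Sν := by
        rw [hSνdef]
        refine Finset.sum_congr rfl fun i _ => ?_
        rw [← hval i]
        exact Finset.sum_congr rfl fun y _ => by
          rw [show (∑ x, Bᵀ y x * Φs i x) = ∑ x, B x y * Φs i x from
            Finset.sum_congr rfl fun x _ => by rw [Matrix.transpose_apply]]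
      rw [hL] at hKF
      exact hKF
    -- Sd ≤ Sν
    have hle2 : Sd ≤ Sν := by
      set Ψs : Fin d → 𝒴 → ℝ :=
        fun i y => hA𝒴.eigenvectorBasis (e (Fin.castLE hd𝒴 i)) y with hΨsdef
      have hΨsortho : ∀ i j, ∑ y, Ψs i y * Ψs j y = if i = j then 1 else 0 := by
        intro i j
        rw [hΨsdef]
        simp only
        rw [eigbasis_ortho hA𝒴]
        by_cases h : i = j
        · subst h; rw [if_pos rfl, if_pos rfl]
        · rw [if_neg h, if_neg]
          intro hh
          exact h (Fin.castLE_injective hd𝒴 (e.injective hh))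
      have hval2 : ∀ i : Fin d, ∑ x, (∑ y, B x y * Ψs i y)^2
          = hA𝒴.eigenvalues (e (Fin.castLE hd𝒴 i)) := by
        intro i
        have h := eig_col_ortho hA𝒴 Bᵀ hAM𝒴 (e (Fin.castLE hd𝒴 i)) (e (Fin.castLE hd𝒴 i))
        rw [if_pos rfl] at h
        rw [← h]
        refine Finset.sum_congr rfl fun x _ => ?_
        rw [sq]
        congr 1 <;>
          exact Finset.sum_congr rfl fun y _ => by rw [Matrix.transpose_apply]
      have hKF := kyfan_bound hA𝒳 B rfl es𝒳 hνmono d hd𝒳 Ψs hΨsortho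
      have hL : ∑ i, ∑ x, (∑ y, B x y * Ψs i y)^2 = Sd := by
        rw [hSddef]
        exact Finset.sum_congr rfl fun i _ => hval2 i
      rw [hL] at hKF
      exact hKF
    have hSdSν : Sd = Sν := le_antisymm hle2 hle1
    -- the witness
    set f₀ : 𝒳 → Fin d → ℝ := fun x i => Φs i x / Real.sqrt (∑ y, P x y) with hf₀def
    set g₀ : 𝒴 → Fin d → ℝ :=
      fun y i => (∑ x, B x y * Φs i x) / Real.sqrt (∑ x', P x' y) with hg₀def
    have hcon : ∀ i j, ∑ x, (∑ y, P x y) * (f₀ x i * f₀ x j) = if i = j then 1 else 0 := by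
      intro i j
      rw [← hΦsortho i j]
      refine Finset.sum_congr rfl fun x _ => ?_
      rw [hf₀def]
      simp only
      rw [div_mul_div_comm, Real.mul_self_sqrt (le_of_lt (hpX x)), mul_comm,
        div_mul_cancel₀ _ (ne_of_gt (hpX x))]
    have hΦf : ∀ i x, Real.sqrt (∑ y', P x y') * f₀ x i = Φs i x := by
      intro i x
      rw [hf₀def]
      simp only
      rw [mul_comm, div_mul_cancel₀ _ (hpXs x)]
    refine ⟨f₀, g₀, hcon, ?_⟩
    rw [htarget, hred f₀ g₀ hcon]
    have hq1 : ∀ i : Fin d, ∀ y : 𝒴,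
        (∑ x, B x y * (Real.sqrt (∑ y', P x y') * f₀ x i)) = ∑ x, B x y * Φs i x := by
      intro i y
      exact Finset.sum_congr rfl fun x _ => by rw [hΦf i x]
    have hterm2 : ∑ i : Fin d, ∑ y, ((∑ x, B x y * (Real.sqrt (∑ y', P x y') * f₀ x i))
        - Real.sqrt (∑ x', P x' y) * g₀ y i)^2 = 0 := by
      refine Finset.sum_eq_zero fun i _ => Finset.sum_eq_zero fun y _ => ?_
      rw [hq1 i y, hg₀def]
      simp only
      rw [mul_comm, div_mul_cancel₀ _ (hpYs y)]
      ring
    have hterm1 : ∑ i : Fin d, ∑ y, (∑ x, B x y * (Real.sqrt (∑ y', P x y') * f₀ x i))^2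
        = Sν := by
      rw [hSνdef]
      refine Finset.sum_congr rfl fun i _ => ?_
      rw [← hval i]
      exact Finset.sum_congr rfl fun y _ => by rw [hq1 i y]
    rw [hterm1, hterm2, hSdSν]
    ring
  · -- lower bound
    rintro t ⟨f, g, hf, rfl⟩
    rw [htarget, hred f g hf]
    set Φ : Fin d → 𝒳 → ℝ := fun i x => Real.sqrt (∑ y', P x y') * f x i with hΦdef
    have hΦortho : ∀ i j, ∑ x, Φ i x * Φ j x = if i = j then 1 else 0 := by
      intro i j
      rw [← hf i j]
      refine Finset.sum_congr rfl fun x _ => ?_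
      rw [hΦdef]
      simp only
      calc (Real.sqrt (∑ y', P x y') * f x i) * (Real.sqrt (∑ y', P x y') * f x j)
          = (Real.sqrt (∑ y', P x y') * Real.sqrt (∑ y', P x y')) * (f x i * f x j) := by ring
        _ = (∑ y, P x y) * (f x i * f x j) := by
            rw [Real.mul_self_sqrt (le_of_lt (hpX x))]
    have hKF := kyfan_bound hA𝒴 Bᵀ hAM𝒴 e hμmono d hd𝒴 Φ hΦortho
    have hKF' : ∑ i : Fin d, ∑ y, (∑ x, B x y * (Real.sqrt (∑ y', P x y') * f x i))^2 ≤ Sd := by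
      rw [hSddef]
      exact le_trans (le_of_eq rfl) hKF
    have hnn : (0:ℝ) ≤ ∑ i : Fin d, ∑ y, ((∑ x, B x y * (Real.sqrt (∑ y', P x y') * f x i))
        - Real.sqrt (∑ x', P x' y) * g y i)^2 :=
      Finset.sum_nonneg fun i _ => Finset.sum_nonneg fun y _ => sq_nonneg _
    linarith
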